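/- For every α ∈ ℂ, the irreducible subquotients V'_{α,0} and V'_{α,1} of the Virasoro modules V_{α,0} and V_{α,1} are isomorphic as Virasoro modules. (For α ∉ ℤ this says V_{α,0} ≅ V_{α,1}; for α ∈ ℤ it says V_{0,0}/ℂv_0 ≅ ⊕_{i≠0} ℂ v_i ⊆ V_{0,1}.) -/

import Mathlib

open Finsupp TensorProduct

noncomputable section

/-- The underlying space of the Virasoro algebra: coordinates on the basis
`{d_n : n ∈ ℤ}` together with the coefficient of the central element `C`. -/
abbrev VirCarrier : Type := (ℤ →₀ ℂ) × ℂ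

/-- The basis element `d_n`. -/
def dGen (n : ℤ) : VirCarrier := (Finsupp.single n 1, 0)

/-- The central element `C`. -/
def cGen : VirCarrier := (0, 1)

/-- `[d_m, d_n] = (n-m) d_{m+n} + δ_{m,-n} ((m³-m)/12) C`. -/
def dBracket (m n : ℤ) : VirCarrier :=
  (Finsupp.single (m + n) ((n : ℂ) - (m : ℂ)), if m = -n then ((m : ℂ) ^ 3 - (m : ℂ)) / 12 else 0)

/-- The bilinear extension of the bracket on basis elements; the central element `C`
brackets to zero with everything (`[d_n, C] = 0`). -/
def virBracket (x y : VirCarrier) : VirCarrier :=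
  x.1.sum fun m a => y.1.sum fun n b => (a * b) • dBracket m n

/-- Action of `d_n` on `V_{α,β}`: `d_n · v_k = (α + k + nβ) v_{k+n}`, where `v_k` is the
basis element `Finsupp.single k 1`. -/
def dAct (α β : ℂ) (n : ℤ) : Module.End ℂ (ℤ →₀ ℂ) :=
  Finsupp.lsum ℂ fun k => (α + (k : ℂ) + (n : ℂ) * β) • Finsupp.lsingle (k + n)

/-- The action of the Virasoro algebra on the intermediate series module `V_{α,β}`;
`C` acts by zero. -/
def vabAction (α β : ℂ) : VirCarrier →ₗ[ℂ] Module.End ℂ (ℤ →₀ ℂ) :=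
  (Finsupp.lsum ℂ fun n =>
    LinearMap.toSpanSingleton ℂ (Module.End ℂ (ℤ →₀ ℂ)) (dAct α β n)).comp
    (LinearMap.fst ℂ (ℤ →₀ ℂ) ℂ)

/-- A subspace invariant under an action. -/
def ActInvariant {L V : Type*} [AddCommGroup V] [Module ℂ V]
    (act : L → Module.End ℂ V) (U : Submodule ℂ V) : Prop :=
  ∀ x : L, ∀ v ∈ U, act x v ∈ U

/-- Irreducibility: the only invariant subspaces are `⊥` and `⊤`. -/
def ActIrreducible {L V : Type*} [AddCommGroup V] [Module ℂ V]
    (act : L → Module.End ℂ V) : Prop :=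
  ∀ U : Submodule ℂ V, ActInvariant act U → U = ⊥ ∨ U = ⊤

/-- The set `S` generates the module: any invariant subspace containing `S` is everything. -/
def ActGenerates {L V : Type*} [AddCommGroup V] [Module ℂ V]
    (act : L → Module.End ℂ V) (S : Set V) : Prop :=
  ∀ U : Submodule ℂ V, ActInvariant act U → S ⊆ U → U = ⊤

/-! ### Auxiliary definitions -/

/-- The diagonal linear map rescaling each basis vector `v_k` by `c k`. -/
def vabScal (c : ℤ → ℂ) : (ℤ →₀ ℂ) →ₗ[ℂ] (ℤ →₀ ℂ) :=
  Finsupp.lsum ℂ fun k => c k • Finsupp.lsingle k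

lemma vabScal_single (c : ℤ → ℂ) (k : ℤ) (b : ℂ) :
    vabScal c (Finsupp.single k b) = Finsupp.single k (c k * b) := by
  rw [vabScal, Finsupp.lsum_single, LinearMap.smul_apply, Finsupp.lsingle_apply,
    Finsupp.smul_single, smul_eq_mul]

lemma dAct_single (α β : ℂ) (n k : ℤ) (b : ℂ) :
    dAct α β n (Finsupp.single k b)
      = Finsupp.single (k + n) ((α + k + n * β) * b) := by
  rw [dAct, Finsupp.lsum_single, LinearMap.smul_apply, Finsupp.lsingle_apply,
    Finsupp.smul_single, smul_eq_mul]

lemma vab_apply (α β : ℂ) (x : VirCarrier) (v : ℤ →₀ ℂ) :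
    vabAction α β x v = x.1.sum fun n a => a • (dAct α β n v) := by
  simp [vabAction, Finsupp.lsum_apply, LinearMap.toSpanSingleton_apply, Finsupp.sum_apply']

lemma vab_intertwine (α β α' β' : ℂ) (g : (ℤ →₀ ℂ) →ₗ[ℂ] (ℤ →₀ ℂ))
    (h : ∀ n : ℤ, g.comp (dAct α β n) = (dAct α' β' n).comp g)
    (x : VirCarrier) (v : ℤ →₀ ℂ) :
    g (vabAction α β x v) = vabAction α' β' x (g v) := by
  rw [vab_apply, vab_apply, map_finsuppSum]
  refine Finsupp.sum_congr fun n _ => ?_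
  rw [map_smul]
  congr 1
  exact LinearMap.congr_fun (h n) v

lemma vabScal_comp (c c' : ℤ → ℂ) (h : ∀ k, c k * c' k = 1) :
    (vabScal c).comp (vabScal c') = LinearMap.id := by
  refine Finsupp.lhom_ext fun k b => ?_
  simp only [LinearMap.comp_apply, vabScal_single, LinearMap.id_apply]
  rw [← mul_assoc, h k, one_mul]

lemma vabScal_apply (c : ℤ → ℂ) (v : ℤ →₀ ℂ) (j : ℤ) :
    vabScal c v j = c j * v j := by
  classical
  rw [vabScal, Finsupp.lsum_apply, Finsupp.sum_apply]
  simp only [LinearMap.smul_apply, Finsupp.lsingle_apply, Finsupp.smul_single,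
    smul_eq_mul, Finsupp.single_apply]
  rw [Finsupp.sum_ite_eq']
  split_ifs with hj
  · rfl
  · rw [Finsupp.notMem_support_iff.mp hj, mul_zero]

/-- For every `α ∈ ℂ`, the irreducible subquotients `V'_{α,0}` and `V'_{α,1}` are isomorphic
Virasoro modules.  For `α ∉ ℤ` this is an isomorphism `V_{α,0} ≅ V_{α,1}`; for `α ∈ ℤ` it is
an isomorphism `V_{0,0}/ℂv_0 ≅ ⊕_{i≠0} ℂ v_i ⊆ V_{0,1}`, expressed by an intertwining
linear map `V_{0,0} → V_{0,1}` with kernel `ℂ v_0` and range `⊕_{i≠0} ℂ v_i`. -/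
theorem vab_prime_iso :
    (∀ α : ℂ, (∀ z : ℤ, α ≠ (z : ℂ)) →
      ∃ e : (ℤ →₀ ℂ) ≃ₗ[ℂ] (ℤ →₀ ℂ),
        ∀ (x : VirCarrier) (v : ℤ →₀ ℂ),
          e (vabAction α 0 x v) = vabAction α 1 x (e v)) ∧
    (∃ f : (ℤ →₀ ℂ) →ₗ[ℂ] (ℤ →₀ ℂ),
      (∀ (x : VirCarrier) (v : ℤ →₀ ℂ), f (vabAction 0 0 x v) = vabAction 0 1 x (f v)) ∧
      LinearMap.ker f = Submodule.span ℂ {Finsupp.single (0 : ℤ) (1 : ℂ)} ∧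
      LinearMap.range f
        = Submodule.span ℂ {g : ℤ →₀ ℂ | ∃ i : ℤ, i ≠ 0 ∧ g = Finsupp.single i 1}) := by
  constructor
  · -- α ∉ ℤ : e (v_k) = (α + k) v_k
    intro α hα
    have hne : ∀ k : ℤ, α + (k : ℂ) ≠ 0 := by
      intro k hk
      exact hα (-k) (by push_cast; linear_combination hk)
    refine ⟨LinearEquiv.ofLinear (vabScal fun k => α + k) (vabScal fun k => (α + k)⁻¹)
        (vabScal_comp _ _ fun k => mul_inv_cancel₀ (hne k))
        (vabScal_comp _ _ fun k => inv_mul_cancel₀ (hne k)), ?_⟩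
    intro x v
    refine vab_intertwine α 0 α 1 _ (fun n => ?_) x v
    refine Finsupp.lhom_ext fun k b => ?_
    simp only [LinearMap.comp_apply, LinearEquiv.ofLinear_toLinearMap] -- may be unneeded
    rw [dAct_single, vabScal_single, vabScal_single, dAct_single]
    congr 1
    push_cast
    ring
  · -- α ∈ ℤ : f (v_k) = k v_k
    refine ⟨vabScal fun k => (k : ℂ), ?_, ?_, ?_⟩
    · intro x v
      refine vab_intertwine 0 0 0 1 _ (fun n => ?_) x v
      refine Finsupp.lhom_ext fun k b => ?_
      simp only [LinearMap.comp_apply]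
      rw [dAct_single, vabScal_single, vabScal_single, dAct_single]
      congr 1
      push_cast
      ring
    · -- kernel
      ext v
      simp only [LinearMap.mem_ker, Submodule.mem_span_singleton]
      constructor
      · intro hv
        refine ⟨v 0, ?_⟩
        ext j
        have hj := DFunLike.congr_fun hv j
        rw [vabScal_apply] at hj
        simp only [Finsupp.coe_zero, Pi.zero_apply] at hj
        rw [Finsupp.smul_single, smul_eq_mul, mul_one, Finsupp.single_apply]
        rcases eq_or_ne j 0 with rfl | hj0
        · rw [if_pos rfl]
        · rw [if_neg (Ne.symm hj0)]
          rcases mul_eq_zero.mp hj with h | h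
          · exact absurd (by exact_mod_cast h : j = 0) hj0
          · exact h.symm
      · rintro ⟨a, rfl⟩
        rw [map_smul, vabScal_single]
        simp
    · -- range
      apply le_antisymm
      · rintro w ⟨v, rfl⟩
        rw [vabScal, Finsupp.lsum_apply]
        refine Submodule.finsuppSum_mem _ _ _ _ fun k hk => ?_
        simp only [LinearMap.smul_apply, Finsupp.lsingle_apply, Finsupp.smul_single,
          smul_eq_mul]
        rcases eq_or_ne k 0 with rfl | hk0
        · simp
        · have : Finsupp.single k ((k : ℂ) * v k) = ((k : ℂ) * v k) • Finsupp.single k 1 := by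
            rw [Finsupp.smul_single, smul_eq_mul, mul_one]
          rw [this]
          exact Submodule.smul_mem _ _ (Submodule.subset_span ⟨k, hk0, rfl⟩)
      · rw [Submodule.span_le]
        rintro g ⟨i, hi, rfl⟩
        refine ⟨((i : ℂ))⁻¹ • Finsupp.single i 1, ?_⟩
        rw [map_smul, vabScal_single, Finsupp.smul_single, smul_eq_mul, mul_one]
        rw [inv_mul_cancel₀ (by exact_mod_cast hi : (i : ℂ) ≠ 0)]
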